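/- For any Pauli operators P_A on A, Q_D on D, and a Clifford unitary U with forward map Λ_D (i.e. U(P_A⊗I)U^† ≃ Λ_C(P_A)⊗Λ_D(P_A)), the OTOC value α_{P_A,Q_D} := (1/d)Tr(U P_A ⊗ I U^† · Q_D · U P_A^† ⊗ I U^† · Q_D^†) satisfies (1/d_D^2) ∑_{Q_D ∈ Pauli_D} α_{P_A,Q_D} F_{Q_D,R_D} = δ_{Λ_D(P_A), R_D}, where F_{Q,R} = (1/d_D)Tr_D(QRQ^†R^†). -/

import Mathlib

open Matrix Kronecker BigOperators

/-- The `n`-qubit Pauli operator `X^x Z^z` (symplectic representation). -/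
noncomputable def pauli {n : ℕ} (x z : Fin n → ZMod 2) :
    Matrix (Fin n → ZMod 2) (Fin n → ZMod 2) ℂ :=
  fun j k => if j = k + x then ((-1 : ℂ)) ^ (∑ i, (z i * k i).val) else 0

/-- The OTOC `α_{P_A,Q_D} = (1/d) Tr(P_A(t) Q_D P_A(t)† Q_D†)` with
`P_A(t) = U (P_A ⊗ I_B) U†` and `Q_D` acting on `D`. -/
noncomputable def otoc (nA nB nC nD : ℕ)
    (U : Matrix ((Fin nC → ZMod 2) × (Fin nD → ZMod 2))
      ((Fin nA → ZMod 2) × (Fin nB → ZMod 2)) ℂ)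
    (x z : Fin nA → ZMod 2) (xq zq : Fin nD → ZMod 2) : ℂ :=
  ((2 ^ nC * 2 ^ nD : ℂ))⁻¹ *
    (U * (pauli x z ⊗ₖ (1 : Matrix (Fin nB → ZMod 2) (Fin nB → ZMod 2) ℂ)) * Uᴴ *
      ((1 : Matrix (Fin nC → ZMod 2) (Fin nC → ZMod 2) ℂ) ⊗ₖ pauli xq zq) *
      U * ((pauli x z)ᴴ ⊗ₖ (1 : Matrix (Fin nB → ZMod 2) (Fin nB → ZMod 2) ℂ)) * Uᴴ *
      ((1 : Matrix (Fin nC → ZMod 2) (Fin nC → ZMod 2) ℂ) ⊗ₖ (pauli xq zq)ᴴ)).trace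

/-- The commutation-phase matrix `F_{Q,R} = (1/d_D) Tr(QRQ†R†)` on `D`. -/
noncomputable def Fmat (nD : ℕ) (q r : (Fin nD → ZMod 2) × (Fin nD → ZMod 2)) : ℂ :=
  ((2 ^ nD : ℂ))⁻¹ * (pauli q.1 q.2 * pauli r.1 r.2 *
    (pauli q.1 q.2)ᴴ * (pauli r.1 r.2)ᴴ).trace

namespace Stmt13Aux


noncomputable def ee {n : ℕ} (v w : Fin n → ZMod 2) : ℂ :=
  (-1) ^ (∑ i, (v i * w i).val)

lemma zmod2_cases (a : ZMod 2) : a = 0 ∨ a = 1 := by revert a; decide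

lemma val_add_pow (a b : ZMod 2) :
    ((-1:ℂ)) ^ ((a+b).val) = (-1)^a.val * (-1)^b.val := by
  rcases zmod2_cases a with ha|ha <;> rcases zmod2_cases b with hb|hb <;>
    subst ha <;> subst hb <;>
    norm_num [show ((2:ZMod 2)).val = 0 from rfl, show ((1:ZMod 2)).val = 1 from rfl,
      show ((0:ZMod 2)).val = 0 from rfl]

lemma ee_prod {n : ℕ} (v w : Fin n → ZMod 2) :
    ee v w = ∏ i, ((-1:ℂ))^((v i * w i).val) :=
  (Finset.prod_pow_eq_pow_sum _ _ _).symm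

lemma ee_comm {n : ℕ} (v w : Fin n → ZMod 2) : ee v w = ee w v := by
  unfold ee; congr 1; exact Finset.sum_congr rfl fun i _ => by rw [mul_comm]

lemma ee_add_right {n : ℕ} (v w w' : Fin n → ZMod 2) :
    ee v (w + w') = ee v w * ee v w' := by
  rw [ee_prod, ee_prod, ee_prod, ← Finset.prod_mul_distrib]
  refine Finset.prod_congr rfl fun i _ => ?_
  rw [Pi.add_apply, mul_add, val_add_pow]

lemma ee_add_left {n : ℕ} (v v' w : Fin n → ZMod 2) :
    ee (v + v') w = ee v w * ee v' w := by
  rw [ee_comm, ee_add_right, ee_comm w v, ee_comm w v']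

lemma ee_sq {n : ℕ} (v w : Fin n → ZMod 2) : ee v w * ee v w = 1 := by
  unfold ee; rw [← pow_add, ← two_mul, pow_mul]; norm_num

lemma addv {n : ℕ} (v : Fin n → ZMod 2) : v + v = 0 := by
  funext i
  rcases zmod2_cases (v i) with h|h <;> simp [Pi.add_apply, h]
  · rfl

lemma addv_eq {n : ℕ} (a b : Fin n → ZMod 2) : a + b = 0 ↔ a = b := by
  constructor
  · intro h
    have := congrArg (· + b) h
    simpa [add_assoc, addv] using this
  · rintro rfl; exact addv a

lemma pauli_zero {n : ℕ} : pauli (0 : Fin n → ZMod 2) 0 = 1 := by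
  ext j k
  simp [pauli, Matrix.one_apply]

lemma pauli_mul {n : ℕ} (x z x' z' : Fin n → ZMod 2) :
    pauli x z * pauli x' z' = ee z x' • pauli (x + x') (z + z') := by
  ext j l
  rw [Matrix.mul_apply, Finset.sum_eq_single (l + x')]
  · simp only [pauli, Matrix.smul_apply, smul_eq_mul, if_pos rfl]
    have hc : (j = l + x' + x) ↔ (j = l + (x + x')) := by
      rw [add_assoc, add_comm x' x]
    by_cases h : j = l + (x + x')
    · rw [if_pos (hc.mpr h), if_pos h]
      show ee z (l + x') * ee z' l = ee z x' * ee (z + z') l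
      rw [ee_add_right, ee_add_left]; ring
    · rw [if_neg (fun hh => h (hc.mp hh)), if_neg h, zero_mul, mul_zero]
  · intro k _ hk
    simp only [pauli]
    rw [if_neg hk, mul_zero]
  · intro h; exact absurd (Finset.mem_univ _) h

lemma pauli_conjT {n : ℕ} (x z : Fin n → ZMod 2) :
    (pauli x z)ᴴ = ee z x • pauli x z := by
  ext j k
  simp only [Matrix.conjTranspose_apply, pauli, Matrix.smul_apply, smul_eq_mul]
  have hc : (k = j + x) ↔ (j = k + x) := by
    constructor <;> (rintro rfl; rw [add_assoc, addv, add_zero])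
  by_cases h : j = k + x
  · rw [if_pos (hc.mpr h), if_pos h]
    rw [star_pow, star_neg, star_one]
    show ee z j = ee z x * ee z k
    rw [h, ee_add_right]; ring
  · rw [if_neg (fun hh => h (hc.mp hh)), if_neg h, star_zero, mul_zero]

lemma pauli_mul_self {n : ℕ} (x z : Fin n → ZMod 2) :
    pauli x z * pauli x z = ee z x • 1 := by
  rw [pauli_mul, addv, addv, pauli_zero]


lemma card_fun (n : ℕ) : (Fintype.card (Fin n → ZMod 2) : ℂ) = 2 ^ n := by
  simp [Fintype.card_fun]

lemma trace_one' (n : ℕ) :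
    (1 : Matrix (Fin n → ZMod 2) (Fin n → ZMod 2) ℂ).trace = 2 ^ n := by
  rw [Matrix.trace_one, card_fun]

lemma vec4 {n : ℕ} (a b : Fin n → ZMod 2) : a + b + a + b = 0 := by
  have : a + b + a + b = (a + b) + (a + b) := by ring
  rw [this, addv]

lemma vec3 {n : ℕ} (a b : Fin n → ZMod 2) : a + b + a = b := by
  have : a + b + a = (a + a) + b := by ring
  rw [this, addv, zero_add]

lemma Fmat_eq (nD : ℕ) (q r : (Fin nD → ZMod 2) × (Fin nD → ZMod 2)) :
    Fmat nD q r = ee q.2 r.1 * ee r.2 q.1 := by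
  obtain ⟨xq, zq⟩ := q; obtain ⟨xr, zr⟩ := r
  unfold Fmat
  rw [pauli_conjT, pauli_conjT]
  simp only [Matrix.mul_smul, Matrix.smul_mul]
  simp only [pauli_mul, Matrix.smul_mul, Matrix.mul_smul, smul_smul]
  rw [vec4, vec4, pauli_zero]
  simp only [smul_smul, Matrix.trace_smul, trace_one', smul_eq_mul, vec3]
  have h2 : (2:ℂ)^nD ≠ 0 := pow_ne_zero _ two_ne_zero
  field_simp
  have e1 := ee_sq zq xq
  have e2 := ee_sq zr xr
  have hz : zq + zr + zq = zr := vec3 zq zr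
  rw [ee_add_left]
  linear_combination (ee zq xr * ee zr xq * ee zq xq * ee zq xq) * e2 +
    (ee zq xr * ee zr xq) * e1

lemma ee_sum {n : ℕ} (u : Fin n → ZMod 2) :
    ∑ v : Fin n → ZMod 2, ee u v = if u = 0 then (2:ℂ)^n else 0 := by
  by_cases h : u = 0
  · subst h
    have : ∀ v : Fin n → ZMod 2, ee (0 : Fin n → ZMod 2) v = 1 := by
      intro v; unfold ee; simp
    simp [this, Finset.card_univ, Fintype.card_fun]
  · rw [if_neg h]
    obtain ⟨i, hi⟩ : ∃ i, u i ≠ 0 := by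
      by_contra hc; push_neg at hc; exact h (funext fun i => hc i)
    have hui : u i = 1 := by rcases zmod2_cases (u i) with h'|h' <;> tauto
    set s : Fin n → ZMod 2 := Pi.single i 1 with hs
    have hes : ee u s = -1 := by
      unfold ee
      rw [Finset.sum_eq_single i]
      · rw [hs, Pi.single_eq_same, hui]; norm_num [show ((1:ZMod 2)).val = 1 from rfl]
      · intro b _ hb
        rw [hs, Pi.single_eq_of_ne hb, mul_zero]; rfl
      · intro hh; exact absurd (Finset.mem_univ _) hh
    have key : ∑ v : Fin n → ZMod 2, ee u v
        = ∑ v : Fin n → ZMod 2, ee u (v + s) := by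
      exact (Fintype.sum_equiv (Equiv.addRight s) _ _ (fun v => rfl)).symm
    have key2 : ∑ v : Fin n → ZMod 2, ee u (v + s)
        = -∑ v : Fin n → ZMod 2, ee u v := by
      have hpt : ∀ v : Fin n → ZMod 2, ee u (v + s) = -1 * ee u v := by
        intro v; rw [ee_add_right, hes]; ring
      simp only [hpt]
      rw [← Finset.mul_sum]; ring
    have : (2:ℂ) * ∑ v : Fin n → ZMod 2, ee u v = 0 := by
      rw [two_mul]; nth_rewrite 1 [key]; rw [key2]; ring
    have h2 : (2:ℂ) ≠ 0 := by norm_num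
    exact (mul_eq_zero.mp this).resolve_left h2

lemma ee_sum' {n : ℕ} (u : Fin n → ZMod 2) :
    ∑ v : Fin n → ZMod 2, ee v u = if u = 0 then (2:ℂ)^n else 0 := by
  rw [← ee_sum u]; exact Finset.sum_congr rfl fun v _ => ee_comm v u


lemma kron_conjT {l m p q : Type*} [Fintype l] [Fintype m] [Fintype p] [Fintype q]
    (A : Matrix l m ℂ) (B : Matrix p q ℂ) : (A ⊗ₖ B)ᴴ = Aᴴ ⊗ₖ Bᴴ := by
  ext ⟨i, j⟩ ⟨k, l⟩
  simp [Matrix.conjTranspose_apply, Matrix.kroneckerMap_apply, star_mul', mul_comm]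

lemma otoc_eq (nA nB nC nD : ℕ)
    (U : Matrix ((Fin nC → ZMod 2) × (Fin nD → ZMod 2))
      ((Fin nA → ZMod 2) × (Fin nB → ZMod 2)) ℂ)
    (x z : Fin nA → ZMod 2)
    (cv : ℂ) (pxc pzc : Fin nC → ZMod 2) (pxd pzd : Fin nD → ZMod 2)
    (hc : ‖cv‖ = 1)
    (hK : U * (pauli x z ⊗ₖ (1 : Matrix (Fin nB → ZMod 2) (Fin nB → ZMod 2) ℂ)) * Uᴴ
        = cv • (pauli pxc pzc ⊗ₖ pauli pxd pzd))
    (xq zq : Fin nD → ZMod 2) :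
    otoc nA nB nC nD U x z xq zq = ee pzd xq * ee zq pxd := by
  have hcc : cv * (starRingEnd ℂ) cv = 1 := by
    have h1 : Complex.normSq cv = 1 := by
      rw [Complex.normSq_eq_norm_sq, hc]; norm_num
    rw [Complex.mul_conj, h1]; norm_num
  have hK' : U * ((pauli x z)ᴴ ⊗ₖ (1 : Matrix (Fin nB → ZMod 2) (Fin nB → ZMod 2) ℂ)) * Uᴴ
      = (star cv * ee pzc pxc * ee pzd pxd) • (pauli pxc pzc ⊗ₖ pauli pxd pzd) := by
    have h1 : ((pauli x z)ᴴ ⊗ₖ (1 : Matrix (Fin nB → ZMod 2) (Fin nB → ZMod 2) ℂ))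
        = (pauli x z ⊗ₖ (1 : Matrix (Fin nB → ZMod 2) (Fin nB → ZMod 2) ℂ))ᴴ := by
      rw [kron_conjT, Matrix.conjTranspose_one]
    have h2 : U * (pauli x z ⊗ₖ (1 : Matrix (Fin nB → ZMod 2) (Fin nB → ZMod 2) ℂ))ᴴ * Uᴴ
        = (U * (pauli x z ⊗ₖ (1 : Matrix (Fin nB → ZMod 2) (Fin nB → ZMod 2) ℂ)) * Uᴴ)ᴴ := by
      rw [Matrix.conjTranspose_mul, Matrix.conjTranspose_mul,
        Matrix.conjTranspose_conjTranspose, Matrix.mul_assoc]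
    rw [h1, h2, hK, Matrix.conjTranspose_smul, kron_conjT, pauli_conjT, pauli_conjT,
      Matrix.smul_kronecker, Matrix.kronecker_smul, smul_smul, smul_smul]
  unfold otoc
  have hexp : U * (pauli x z ⊗ₖ (1 : Matrix (Fin nB → ZMod 2) (Fin nB → ZMod 2) ℂ)) * Uᴴ *
      ((1 : Matrix (Fin nC → ZMod 2) (Fin nC → ZMod 2) ℂ) ⊗ₖ pauli xq zq) *
      U * ((pauli x z)ᴴ ⊗ₖ (1 : Matrix (Fin nB → ZMod 2) (Fin nB → ZMod 2) ℂ)) * Uᴴ *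
      ((1 : Matrix (Fin nC → ZMod 2) (Fin nC → ZMod 2) ℂ) ⊗ₖ (pauli xq zq)ᴴ)
      = (U * (pauli x z ⊗ₖ (1 : Matrix (Fin nB → ZMod 2) (Fin nB → ZMod 2) ℂ)) * Uᴴ) *
        ((1 : Matrix (Fin nC → ZMod 2) (Fin nC → ZMod 2) ℂ) ⊗ₖ pauli xq zq) *
        (U * ((pauli x z)ᴴ ⊗ₖ (1 : Matrix (Fin nB → ZMod 2) (Fin nB → ZMod 2) ℂ)) * Uᴴ) *
        ((1 : Matrix (Fin nC → ZMod 2) (Fin nC → ZMod 2) ℂ) ⊗ₖ (pauli xq zq)ᴴ) := by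
    simp only [Matrix.mul_assoc]
  rw [hexp, hK, hK', pauli_conjT xq zq, Matrix.kronecker_smul]
  simp only [Matrix.smul_mul, Matrix.mul_smul, smul_smul]
  rw [← Matrix.mul_kronecker_mul, ← Matrix.mul_kronecker_mul, ← Matrix.mul_kronecker_mul]
  simp only [mul_one, one_mul]
  rw [Matrix.trace_smul, Matrix.trace_kronecker, pauli_mul_self]
  simp only [pauli_mul, Matrix.smul_mul, Matrix.mul_smul, smul_smul, Matrix.trace_smul,
    smul_eq_mul, trace_one']
  rw [vec4, vec4, pauli_zero, trace_one', vec3, ee_add_left]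
  have e1 := ee_sq pzc pxc
  have e2 := ee_sq pzd pxd
  have e3 := ee_sq zq xq
  have e4 := ee_sq pzd xq
  have hC : (2:ℂ)^nC ≠ 0 := pow_ne_zero _ two_ne_zero
  have hD : (2:ℂ)^nD ≠ 0 := pow_ne_zero _ two_ne_zero
  field_simp
  have hcc' : cv * star cv = 1 := hcc
  linear_combination
    (ee pzd xq * ee zq pxd * ee zq xq^2 * ee pzc pxc^2 * ee pzd pxd^2) * hcc' +
    (ee pzd xq * ee zq pxd * ee zq xq^2 * ee pzc pxc^2) * e2 +
    (ee pzd xq * ee zq pxd * ee zq xq^2) * e1 +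
    (ee pzd xq * ee zq pxd) * e3

end Stmt13Aux

open Stmt13Aux

/-- `(1/d_D²) ∑_{Q_D} α_{P_A,Q_D} F_{Q_D,R_D} = δ_{Λ_D(P_A),R_D}`. -/


theorem stmt13 (nA nB nC nD : ℕ)
    (U : Matrix ((Fin nC → ZMod 2) × (Fin nD → ZMod 2))
      ((Fin nA → ZMod 2) × (Fin nB → ZMod 2)) ℂ)
    (hU1 : U * Uᴴ = 1) (hU2 : Uᴴ * U = 1)
    (c : (Fin nA → ZMod 2) → (Fin nA → ZMod 2) → ℂ)
    (xc zc : (Fin nA → ZMod 2) → (Fin nA → ZMod 2) → (Fin nC → ZMod 2))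
    (xd zd : (Fin nA → ZMod 2) → (Fin nA → ZMod 2) → (Fin nD → ZMod 2))
    (hClif : ∀ x z : Fin nA → ZMod 2, ‖c x z‖ = 1 ∧
      U * (pauli x z ⊗ₖ (1 : Matrix (Fin nB → ZMod 2) (Fin nB → ZMod 2) ℂ)) * Uᴴ
        = c x z • (pauli (xc x z) (zc x z) ⊗ₖ pauli (xd x z) (zd x z)))
    (x z : Fin nA → ZMod 2)
    (RD : (Fin nD → ZMod 2) × (Fin nD → ZMod 2)) :
    (((2 ^ nD : ℂ)) ^ 2)⁻¹ *
      ∑ QD : (Fin nD → ZMod 2) × (Fin nD → ZMod 2),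
        otoc nA nB nC nD U x z QD.1 QD.2 * Fmat nD QD RD
      = if (xd x z, zd x z) = RD then 1 else 0 := by
  obtain ⟨hc, hK⟩ := hClif x z
  have hot : ∀ QD : (Fin nD → ZMod 2) × (Fin nD → ZMod 2),
      otoc nA nB nC nD U x z QD.1 QD.2 * Fmat nD QD RD
      = ee (zd x z + RD.2) QD.1 * ee QD.2 (xd x z + RD.1) := by
    intro QD
    rw [otoc_eq nA nB nC nD U x z _ _ _ _ _ hc hK, Fmat_eq, ee_add_left, ee_add_right]
    ring
  rw [Finset.sum_congr rfl (fun QD _ => hot QD)]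
  rw [Fintype.sum_prod_type]
  simp only [Prod.fst, Prod.snd]
  rw [← Finset.sum_mul_sum]
  rw [ee_sum, ee_sum']
  have hprod : ((xd x z, zd x z) = RD) ↔ (zd x z + RD.2 = 0 ∧ xd x z + RD.1 = 0) := by
    rw [addv_eq, addv_eq, Prod.ext_iff]
    tauto
  by_cases h1 : zd x z + RD.2 = 0 <;> by_cases h2 : xd x z + RD.1 = 0
  · rw [if_pos h1, if_pos h2, if_pos (hprod.mpr ⟨h1, h2⟩)]
    have hD : (2:ℂ)^nD ≠ 0 := pow_ne_zero _ two_ne_zero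
    field_simp
  · rw [if_pos h1, if_neg h2, if_neg (fun hh => h2 (hprod.mp hh).2)]
    ring
  · rw [if_neg h1, if_pos h2, if_neg (fun hh => h1 (hprod.mp hh).1)]
    ring
  · rw [if_neg h1, if_neg h2, if_neg (fun hh => h1 (hprod.mp hh).1)]
    ring
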